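/- Over an algebraically closed field of characteristic 0, the quartic F = x²z² + 2y²xz + y⁴ − y·x³ has exactly one singular point, namely (0:0:1). -/
import Mathlib


/-- The quartic F = x²z² + 2y²xz + y⁴ − yx³ (Hui normal form for A₆) over an
algebraically closed field of characteristic 0 has exactly one singular
point, namely (0:0:1).  Partials: ∂F/∂x = 2xz² + 2y²z − 3yx²,
∂F/∂y = 4yxz + 4y³ − x³, ∂F/∂z = 2x²z + 2y²x. -/
theorem quartic_A6_singular_point
    (K : Type*) [Field K] [IsAlgClosed K] [CharZero K]
    (a b c : K) (h : (a, b, c) ≠ (0, 0, 0)) :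
    (a ^ 2 * c ^ 2 + 2 * b ^ 2 * a * c + b ^ 4 - b * a ^ 3 = 0 ∧
     2 * a * c ^ 2 + 2 * b ^ 2 * c - 3 * b * a ^ 2 = 0 ∧
     4 * b * a * c + 4 * b ^ 3 - a ^ 3 = 0 ∧
     2 * a ^ 2 * c + 2 * b ^ 2 * a = 0) ↔
    ∃ t : K, t ≠ 0 ∧ (a, b, c) = (0, 0, t) := by
  constructor
  · rintro ⟨e1, e2, e3, e4⟩
    have ha : a = 0 := by
      by_contra ha
      have hmul : a * (a * c + b ^ 2) = 0 := by linear_combination e4 / 2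
      have hsum : a * c + b ^ 2 = 0 := (mul_eq_zero.mp hmul).resolve_left ha
      have hb : b = 0 := by
        have hba : b * a ^ 3 = 0 := by
          linear_combination (a * c + b ^ 2) * hsum - e1
        rcases mul_eq_zero.mp hba with hb | ha3
        · exact hb
        · exact absurd (pow_eq_zero_iff (n := 3) (by norm_num) |>.mp ha3) ha
      have hc : c = 0 := by
        have hac : a * c = 0 := by linear_combination hsum - b * hb
        exact (mul_eq_zero.mp hac).resolve_left ha
      have ha3 : a ^ 3 = 0 := by
        rw [hb, hc] at e3; linear_combination -e3
      exact ha (pow_eq_zero_iff (n := 3) (by norm_num) |>.mp ha3)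
    have hb : b = 0 := by
      have hb3 : b ^ 3 = 0 := by rw [ha] at e3; linear_combination e3 / 4
      exact pow_eq_zero_iff (n := 3) (by norm_num) |>.mp hb3
    have hc : c ≠ 0 := by
      intro hc
      exact h (by rw [ha, hb, hc])
    exact ⟨c, hc, by rw [ha, hb]⟩
  · rintro ⟨t, ht, heq⟩
    obtain ⟨ha, hb, hc⟩ : a = 0 ∧ b = 0 ∧ c = t := by
      simpa [Prod.ext_iff] using heq
    subst ha; subst hb; subst hc
    norm_num
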